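/- Let $G$ be a locally compact Polish group, $(X,d_X)$ a compact metric space, and $Y \subseteq \mathrm{Lip}(G,X)$ a subflow. Then $Y$ is a minimal $G$-flow if and only if $Y$ is $(D,\epsilon)$-minimal for every pre-compact $D \subseteq G$ and every $\epsilon > 0$. -/

import Mathlib

open scoped Pointwise

/-- The uniform distance `d_B(u,v) = sup_{h ∈ B} d_X(u h, v h)` on restrictions to `B`. -/
noncomputable def dB {G X : Type*} [MetricSpace G] [MetricSpace X]
    (B : Set G) (u v : G → X) : ℝ :=
  ⨆ h ∈ B, dist (u h) (v h)

/-- `Y` is `(D,ε)`-minimal: for every `y ∈ Y`, the set of restrictions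
`{(g⬝y)|_D : g ∈ G}` is `ε`-dense in `S_D(Y)`. -/
def EpsMin {G X : Type*} [MetricSpace G] [Group G] [MetricSpace X]
    (D : Set G) (ε : ℝ) (Y : Set (G → X)) : Prop :=
  ∀ y ∈ Y, ∀ z ∈ Y, ∃ g : G, dB D (fun h => y (h * g)) z < ε

lemma dB_le_aux {G X : Type*} [MetricSpace G] [MetricSpace X]
    {B : Set G} {u v : G → X} {a : ℝ} (ha : 0 ≤ a)
    (H : ∀ h ∈ B, dist (u h) (v h) ≤ a) : dB B u v ≤ a :=
  Real.iSup_le (fun h => Real.iSup_le (fun hh => H h hh) ha) ha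

lemma le_dB {G X : Type*} [MetricSpace G] [MetricSpace X] [CompactSpace X]
    {B : Set G} {u v : G → X} {h : G} (hh : h ∈ B) :
    dist (u h) (v h) ≤ dB B u v := by
  obtain ⟨C, hC⟩ := Metric.isBounded_iff.mp (isCompact_univ : IsCompact (Set.univ : Set X)).isBounded
  have hbdd : BddAbove (Set.range fun g => ⨆ _ : g ∈ B, dist (u g) (v g)) := by
    refine ⟨max C 0, ?_⟩
    rintro x ⟨g, rfl⟩
    by_cases hg : g ∈ B
    · have h1 : dist (u g) (v g) ≤ C := hC (Set.mem_univ _) (Set.mem_univ _)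
      calc (⨆ _ : g ∈ B, dist (u g) (v g)) ≤ C :=
            Real.iSup_le (fun _ => h1) (le_trans dist_nonneg h1)
        _ ≤ max C 0 := le_max_left _ _
    · simp [hg, Real.iSup_of_isEmpty]
  refine le_trans ?_ (le_ciSup hbdd h)
  exact le_ciSup (f := fun _ : h ∈ B => dist (u h) (v h)) (Set.finite_range _).bddAbove hh

/-- A subflow `Y ⊆ Lip(G,X)` (with the pointwise topology) is minimal — every orbit is
dense in `Y` — iff `Y` is `(D,ε)`-minimal for every pre-compact `D ⊆ G` and `ε > 0`. -/
theorem minimal_iff_epsMin {G X : Type*} [MetricSpace G] [Group G]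
    [IsTopologicalGroup G] [PolishSpace G] [LocallyCompactSpace G]
    [MetricSpace X] [CompactSpace X]
    (hd : ∀ g h k : G, dist (g * k) (h * k) = dist g h)
    (Y : Set (G → X)) (hYlip : ∀ f ∈ Y, LipschitzWith 1 f)
    (hYc : IsClosed Y) (hYinv : ∀ (g : G), ∀ f ∈ Y, (fun h => f (h * g)) ∈ Y) :
    (∀ y ∈ Y, ∀ z ∈ Y, z ∈ closure {w : G → X | ∃ g : G, w = fun h => y (h * g)}) ↔
      ∀ D : Set G, IsCompact (closure D) → ∀ ε : ℝ, 0 < ε → EpsMin D ε Y := by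
  constructor
  · intro hmin D hD ε hε y hy z hz
    -- finite (ε/8)-net for D
    obtain ⟨F, hFfin, hFcov⟩ :=
      Metric.totallyBounded_iff.mp hD.totallyBounded (ε/8) (by positivity)
    -- neighborhood of z controlling points of F
    set U : Set (G → X) := ⋂ f ∈ F, {w : G → X | dist (w f) (z f) < ε/4} with hU
    have hUopen : IsOpen U :=
      hFfin.isOpen_biInter (fun f _ =>
        isOpen_lt ((continuous_apply f).dist continuous_const) continuous_const)
    have hzU : z ∈ U := by
      simp only [hU, Set.mem_iInter, Set.mem_setOf_eq]
      intro f _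
      rw [dist_self]
      positivity
    have := mem_closure_iff_nhds.mp (hmin y hy z hz) U (hUopen.mem_nhds hzU)
    obtain ⟨w, hwU, g, rfl⟩ := this
    refine ⟨g, lt_of_le_of_lt (dB_le_aux (a := ε/2) (by positivity) ?_) (by linarith)⟩
    intro h hh
    have hhK : h ∈ ⋃ f ∈ F, Metric.ball f (ε/8) := hFcov (subset_closure hh)
    simp only [Set.mem_iUnion, Metric.mem_ball] at hhK
    obtain ⟨f, hfF, hhf⟩ := hhK
    have hwf : dist (y (f * g)) (z f) < ε/4 := Set.mem_iInter₂.mp hwU f hfF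
    have h1 : dist (y (h * g)) (y (f * g)) ≤ dist h f := by
      have := (hYlip y hy).dist_le_mul (h * g) (f * g)
      rw [hd] at this
      simpa using this
    have h2 : dist (z f) (z h) ≤ dist f h := by
      have := (hYlip z hz).dist_le_mul f h
      simpa using this
    have hfh : dist f h < ε/8 := by rwa [dist_comm]
    calc dist (y (h * g)) (z h)
        ≤ dist (y (h * g)) (y (f * g)) + dist (y (f * g)) (z f) + dist (z f) (z h) :=
          dist_triangle4 _ _ _ _
      _ ≤ dist h f + dist (y (f * g)) (z f) + dist f h := by
          exact add_le_add (add_le_add h1 le_rfl) h2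
      _ ≤ ε/2 := by linarith
  · intro hEps y hy z hz
    rw [mem_closure_iff_nhds]
    intro U hU
    rw [nhds_pi, Filter.mem_pi] at hU
    obtain ⟨I, hIfin, t, ht, hsub⟩ := hU
    have hball : ∀ i : G, ∃ ε > 0, Metric.ball (z i) ε ⊆ t i := fun i =>
      Metric.mem_nhds_iff.mp (ht i)
    choose ε' hε' hb using hball
    rcases I.eq_empty_or_nonempty with hIe | hIne
    · refine ⟨fun h => y (h * 1), ?_, ⟨1, rfl⟩⟩
      apply hsub
      intro i hi
      rw [hIe] at hi
      exact absurd hi (Set.notMem_empty i)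
    · set ε0 : ℝ := hIfin.toFinset.inf' (by simpa using hIne) ε' with hε0
      have hε0pos : 0 < ε0 := by
        apply Finset.lt_inf'_iff (by simpa using hIne) |>.mpr
        intro i _
        exact hε' i
      have hDc : IsCompact (closure I) := by
        rw [hIfin.isClosed.closure_eq]
        exact hIfin.isCompact
      obtain ⟨g, hg⟩ := hEps I hDc ε0 hε0pos y hy z hz
      refine ⟨fun h => y (h * g), hsub ?_, ⟨g, rfl⟩⟩
      intro i hi
      apply hb i
      rw [Metric.mem_ball, dist_comm]
      calc dist (z i) (y (i * g)) = dist (y (i * g)) (z i) := dist_comm _ _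
        _ ≤ dB I (fun h => y (h * g)) z := le_dB (u := fun h => y (h * g)) (v := z) hi
        _ < ε0 := hg
        _ ≤ ε' i := Finset.inf'_le _ (by simpa using hi)
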